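/- Let L ≥ 1, let n₀ = n, n₁, …, n_{L−1} be positive layer dimensions and n_L = d the output dimension. Let φ : ℝ → ℝ be convex on all of ℝ and monotone (nondecreasing). For l = 1, …, L let W^l be an n_l × n_{l−1} real matrix all of whose entries are nonnegative, V^l an n_l × n real matrix all of whose entries are nonpositive, and ω^l ∈ ℝ^{n_l}, and additionally suppose W^1 = 0. Define z⁰(x) = x, z^l(x) = φ applied componentwise to (W^l · z^{l−1}(x) + V^l · x + ω^l) for l = 1, …, L−1, and f(x) = W^L · z^{L−1}(x) + V^L · x + ω^L. Then for every output index i ∈ Fin d, the map x ↦ (f x) i is convex on all of ℝ^n and antitone with respect to the componentwise partial order on ℝ^n: if x ≤ x' componentwise, then (f x) i ≥ (f x') i. -/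

import Mathlib

open Matrix

private lemma myConvexOn_sum {n : ℕ} {ι : Type*} (s : Finset ι) (g : ι → (Fin n → ℝ) → ℝ)
    (h : ∀ j ∈ s, ConvexOn ℝ Set.univ (g j)) :
    ConvexOn ℝ Set.univ (fun x => ∑ j ∈ s, g j x) := by
  classical
  induction s using Finset.induction with
  | empty => simpa using convexOn_const (0 : ℝ) convex_univ
  | @insert a t ha ih =>
    simp only [Finset.sum_insert ha]
    exact (h _ (Finset.mem_insert_self _ _)).add
      (ih fun j hj => h j (Finset.mem_insert_of_mem hj))

private lemma myComp_convex {n : ℕ} {φ : ℝ → ℝ} {g : (Fin n → ℝ) → ℝ}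
    (hφc : ConvexOn ℝ Set.univ φ) (hφm : Monotone φ) (hg : ConvexOn ℝ Set.univ g) :
    ConvexOn ℝ Set.univ (fun x => φ (g x)) := by
  refine ⟨convex_univ, fun x _ y _ a b ha hb hab => ?_⟩
  calc φ (g (a • x + b • y)) ≤ φ (a * g x + b * g y) := by
        have := hg.2 (Set.mem_univ x) (Set.mem_univ y) ha hb hab
        exact hφm (by simpa [smul_eq_mul] using this)
    _ ≤ a * φ (g x) + b * φ (g y) := by
        have := hφc.2 (Set.mem_univ (g x)) (Set.mem_univ (g y)) ha hb hab
        simpa [smul_eq_mul] using this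
  
private lemma myLayer {n m k : ℕ}
    (A : Matrix (Fin m) (Fin k) ℝ) (B : Matrix (Fin m) (Fin n) ℝ) (c : Fin m → ℝ)
    (g : (Fin n → ℝ) → (Fin k → ℝ))
    (hB : ∀ i j, B i j ≤ 0)
    (hAg : ∀ i j, ConvexOn ℝ Set.univ (fun x => A i j * g x j) ∧
      Antitone (fun x => A i j * g x j)) :
    ∀ i, ConvexOn ℝ Set.univ (fun x => (A.mulVec (g x) + B.mulVec x + c) i)
       ∧ Antitone (fun x => (A.mulVec (g x) + B.mulVec x + c) i) := by
  intro i
  have hrw : (fun x : Fin n → ℝ => (A.mulVec (g x) + B.mulVec x + c) i)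
      = fun x => (∑ j, A i j * g x j) + ((∑ j, B i j * x j) + c i) := by
    funext x
    simp [Matrix.mulVec, dotProduct, add_assoc]
  rw [hrw]
  constructor
  · refine (myConvexOn_sum _ _ fun j _ => (hAg i j).1).add (ConvexOn.add ?_ (convexOn_const _ convex_univ))
    refine myConvexOn_sum _ _ fun j _ => ?_
    exact ⟨convex_univ, fun x _ y _ a b ha hb hab => le_of_eq (by simp [smul_eq_mul]; ring)⟩
  · intro x y hxy
    have h1 : (∑ j, A i j * g y j) ≤ ∑ j, A i j * g x j :=
      Finset.sum_le_sum fun j _ => (hAg i j).2 hxy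
    have h2 : (∑ j, B i j * y j) ≤ ∑ j, B i j * x j :=
      Finset.sum_le_sum fun j _ => mul_le_mul_of_nonpos_left (hxy j) (hB i j)
    exact add_le_add h1 (add_le_add_left h2 _)

/-- The output of an input-convex neural network
`z⁰ = x`, `z^l = φ(W^l z^{l−1} + V^l x + ω^l)` (`l = 1, …, L−1`),
`f(x) = W^L z^{L−1}(x) + V^L x + ω^L`,
with convex nondecreasing activation `φ`, elementwise nonnegative weight
matrices `W^l` with `W^1 = 0`, and elementwise nonpositive feedforward
matrices `V^l`, is componentwise convex and antitone
(for the componentwise partial order) in the input `x`.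
Here `dims l` is the width `n_l` of layer `l` (`dims 0 = n`, and
`dims (L - 1 + 1) = dims L = d` since `1 ≤ L`),
and `W l`, `V l`, `ω l` are the data of layer `l + 1`
(so `W 0` is the paper's `W^1`). -/
theorem icnn_output_convex_antitone
    (L : ℕ) (hL : 1 ≤ L)
    (dims : ℕ → ℕ) (hdims : ∀ l, l ≤ L - 1 → 0 < dims l)
    (φ : ℝ → ℝ) (hφ_convex : ConvexOn ℝ Set.univ φ) (hφ_mono : Monotone φ)
    (W : (l : ℕ) → Matrix (Fin (dims (l + 1))) (Fin (dims l)) ℝ)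
    (hW : ∀ l, l + 1 ≤ L → ∀ i j, 0 ≤ W l i j)
    (hW1 : W 0 = 0)
    (V : (l : ℕ) → Matrix (Fin (dims (l + 1))) (Fin (dims 0)) ℝ)
    (hV : ∀ l, l + 1 ≤ L → ∀ i j, V l i j ≤ 0)
    (ω : (l : ℕ) → Fin (dims (l + 1)) → ℝ)
    (z : (l : ℕ) → (Fin (dims 0) → ℝ) → (Fin (dims l) → ℝ))
    (hz0 : ∀ x, z 0 x = x)
    (hzrec : ∀ l, l + 1 ≤ L - 1 → ∀ x,
      z (l + 1) x = fun i => φ (((W l).mulVec (z l x) + (V l).mulVec x + ω l) i))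
    (f : (Fin (dims 0) → ℝ) → (Fin (dims (L - 1 + 1)) → ℝ))
    (hf : ∀ x, f x =
      (W (L - 1)).mulVec (z (L - 1) x) + (V (L - 1)).mulVec x + ω (L - 1)) :
    ∀ i : Fin (dims (L - 1 + 1)),
      ConvexOn ℝ Set.univ (fun x => f x i) ∧
      Antitone (fun x => f x i) := by
  -- main claim, by induction on the layer index
  have claim : ∀ l, l ≤ L - 1 → ∀ i j,
      ConvexOn ℝ Set.univ (fun x => W l i j * z l x j) ∧
      Antitone (fun x => W l i j * z l x j) := by
    intro l
    induction l with
    | zero =>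
      intro _ i j
      have : (fun x : Fin (dims 0) → ℝ => W 0 i j * z 0 x j) = fun _ => 0 := by
        funext x; simp [hW1]
      rw [this]
      exact ⟨convexOn_const _ convex_univ, antitone_const⟩
    | succ m ih =>
      intro hm i j
      have hmL1 : m + 1 ≤ L - 1 := hm
      have hmL : m + 1 ≤ L := le_trans hmL1 (Nat.sub_le L 1)
      have hm' : m ≤ L - 1 := le_trans (Nat.le_succ m) hm
      -- preactivation of layer m+1
      have hpre := myLayer (W m) (V m) (ω m) (z m) (hV m hmL) (ih hm')
      have hzconv : ConvexOn ℝ Set.univ (fun x => z (m + 1) x j) := by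
        have : (fun x => z (m + 1) x j)
            = fun x => φ (((W m).mulVec (z m x) + (V m).mulVec x + ω m) j) := by
          funext x; rw [hzrec m hmL1 x]
        rw [this]
        exact myComp_convex hφ_convex hφ_mono (hpre j).1
      have hzanti : Antitone (fun x => z (m + 1) x j) := by
        intro x y hxy
        show z (m + 1) y j ≤ z (m + 1) x j
        rw [hzrec m hmL1 x, hzrec m hmL1 y]
        exact hφ_mono ((hpre j).2 hxy)
      have hWnn : 0 ≤ W (m + 1) i j := hW (m + 1) (by omega) i j
      constructor
      · simpa [smul_eq_mul] using hzconv.smul hWnn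
      · intro x y hxy
        exact mul_le_mul_of_nonneg_left (hzanti hxy) hWnn
  intro i
  have hL1 : L - 1 + 1 ≤ L := by omega
  have hfinal := myLayer (W (L - 1)) (V (L - 1)) (ω (L - 1)) (z (L - 1))
    (hV (L - 1) hL1) (claim (L - 1) le_rfl)
  have hrw : (fun x => f x i)
      = fun x => ((W (L - 1)).mulVec (z (L - 1) x) + (V (L - 1)).mulVec x + ω (L - 1)) i := by
    funext x; rw [hf x]
  rw [hrw]
  exact hfinal i
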